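/- arXiv:2105.11771 — 3 statements merged into one kernel-verified Lean document; each statement's English description precedes it below -/
import Mathlib

section
/- For F analytic on a disk of radius > 1 with F(z) = ∑_{n≥0} a_n z^n, and for |z| ≤ 1: (1/π²)·∫₀^π ∫₀^π (F(z cos θ₁) − F(z cos θ₂))/(cos θ₁ − cos θ₂) dθ₁ dθ₂ = (F(z) − F(−z))/2. -/
open Real Finset MeasureTheory


noncomputable def cW (j : ℕ) : ℝ := ∏ i ∈ range j, (2*(i:ℝ)+1)/(2*i+2)

lemma cW_succ (j : ℕ) : cW (j+1) = cW j * ((2*(j:ℝ)+1)/(2*j+2)) := by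
  rw [cW, cW, prod_range_succ]

-- key step A: reflection
lemma refl_sum (m : ℕ) (g : ℕ → ℕ → ℝ) :
    ∑ j ∈ range (m+1), g j (m - j) = ∑ j ∈ range (m+1), g (m - j) j := by
  rw [← Finset.sum_range_reflect (fun j => g j (m - j)) (m+1)]
  apply Finset.sum_congr rfl
  intro j hj
  simp only [mem_range] at hj
  congr 1 <;> omega

lemma cW_conv (m : ℕ) : ∑ j ∈ range (m+1), cW j * cW (m - j) = 1 := by
  induction m with
  | zero => simp [cW]
  | succ m ih =>
    set T : ℕ → ℝ := fun m => ∑ j ∈ range (m+1), cW j * cW (m - j) with hT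
    have hsym : ∀ M : ℕ, ∑ j ∈ range (M+1), (j:ℝ) * (cW j * cW (M - j))
        = ∑ j ∈ range (M+1), ((M:ℝ) - j) * (cW j * cW (M - j)) := by
      intro M
      have := refl_sum M (fun j k => (j:ℝ) * (cW j * cW k))
      rw [this]
      apply Finset.sum_congr rfl
      intro j hj
      simp only [mem_range] at hj
      have h1 : ((M - j : ℕ) : ℝ) = (M:ℝ) - j := by
        rw [Nat.cast_sub (by omega)]
      rw [h1, mul_comm (cW (M-j)) (cW j)]
    -- A : (M+1) * T(M+1)... first: sum of coeff (M) version
    have hA : ∀ M : ℕ, ((M:ℝ)) * T M = 2 * ∑ j ∈ range (M+1), (j:ℝ) * (cW j * cW (M - j)) := by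
      intro M
      have h2 : ∑ j ∈ range (M+1), (j:ℝ) * (cW j * cW (M - j))
          + ∑ j ∈ range (M+1), ((M:ℝ) - j) * (cW j * cW (M - j))
          = (M:ℝ) * T M := by
        rw [hT, ← Finset.sum_add_distrib, Finset.mul_sum]
        apply Finset.sum_congr rfl
        intro j _; ring
      rw [← h2, ← hsym]; ring
    -- B : shift
    have hB : ∑ j ∈ range (m+2), (j:ℝ) * (cW j * cW (m+1 - j))
        = (1/2) * ∑ j ∈ range (m+1), (2*(j:ℝ)+1) * (cW j * cW (m - j)) := by
      rw [Finset.sum_range_succ' (fun j => (j:ℝ) * (cW j * cW (m+1 - j))) (m+1)]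
      simp only [Nat.cast_zero, zero_mul, add_zero, Nat.cast_succ]
      rw [Finset.mul_sum]
      apply Finset.sum_congr rfl
      intro j hj
      simp only [mem_range] at hj
      have h3 : m + 1 - (j+1) = m - j := by omega
      rw [h3, cW_succ]
      have h4 : (2*(j:ℝ)+2) ≠ 0 := by positivity
      field_simp
    -- C
    have hC : ∑ j ∈ range (m+1), (2*(j:ℝ)+1) * (cW j * cW (m - j)) = ((m:ℝ)+1) * T m := by
      have h5 : ∑ j ∈ range (m+1), (2*(j:ℝ)+1) * (cW j * cW (m - j))
          = ∑ j ∈ range (m+1), (2*((m:ℝ)-j)+1) * (cW j * cW (m - j)) := by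
        have := refl_sum m (fun j k => (2*(j:ℝ)+1) * (cW j * cW k))
        rw [this]
        apply Finset.sum_congr rfl
        intro j hj
        simp only [mem_range] at hj
        have h1 : ((m - j : ℕ) : ℝ) = (m:ℝ) - j := by rw [Nat.cast_sub (by omega)]
        rw [h1, mul_comm (cW (m-j)) (cW j)]
      have h6 : 2 * ∑ j ∈ range (m+1), (2*(j:ℝ)+1) * (cW j * cW (m - j))
          = (2*(m:ℝ)+2) * T m := by
        rw [two_mul]
        nth_rewrite 2 [h5]
        rw [hT, Finset.mul_sum, ← Finset.sum_add_distrib]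
        apply Finset.sum_congr rfl
        intro j _; ring
      linarith
    have key : ((m:ℝ)+1) * T (m+1) = ((m:ℝ)+1) * T m := by
      have := hA (m+1)
      push_cast at this
      rw [this, hB, hC]; ring
    have hm : ((m:ℝ)+1) ≠ 0 := by positivity
    have hTT := mul_left_cancel₀ hm key
    show T (m+1) = 1
    rw [hTT]; exact ih

noncomputable def Wal (k : ℕ) : ℝ := ∫ x in (0:ℝ)..π, Real.cos x ^ k

lemma Wal_odd (k : ℕ) (hk : Odd k) : Wal k = 0 := by
  have h : Wal k = -Wal k := by
    have h1 : (∫ x in (0:ℝ)..π, Real.cos (π - x) ^ k) = ∫ x in (π - π)..(π - 0), Real.cos x ^ k :=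
      intervalIntegral.integral_comp_sub_left (fun x => Real.cos x ^ k) π
    simp only [sub_self, sub_zero] at h1
    have h2 : ∀ x : ℝ, Real.cos (π - x) ^ k = -(Real.cos x ^ k) := by
      intro x
      rw [Real.cos_pi_sub, hk.neg_pow]
    simp only [h2] at h1
    rw [intervalIntegral.integral_neg] at h1
    rw [Wal]
    linarith [h1]
  linarith

lemma Wal_even (m : ℕ) : Wal (2*m) = π * cW m := by
  have heq : Wal (2*m) = ∫ x in (0:ℝ)..π, Real.sin x ^ (2*m) := by
    -- ∫ 0..π sin^{2m} = ∫ -π/2..π/2 cos^{2m}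
    have h1 : (∫ x in (0:ℝ)..π, Real.sin x ^ (2*m)) = ∫ x in (-(π/2))..(π/2), Real.cos x ^ (2*m) := by
      have := intervalIntegral.integral_comp_sub_left (fun x => Real.cos x ^ (2*m)) (π/2)
        (a := 0) (b := π)
      rw [show π/2 - π = -(π/2) by ring, show π/2 - 0 = π/2 by ring] at this
      rw [← this]
      apply intervalIntegral.integral_congr
      intro x _
      simp [Real.cos_pi_div_two_sub]
    -- ∫ -π/2..0 cos^{2m} = ∫ 0..π/2 cos^{2m}
    have h2 : (∫ x in (-(π/2))..(0:ℝ), Real.cos x ^ (2*m)) = ∫ x in (0:ℝ)..(π/2), Real.cos x ^ (2*m) := by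
      have h := intervalIntegral.integral_comp_neg (fun x => Real.cos x ^ (2*m)) (a := (π/2)) (b := 0)
      simp only [neg_zero] at h
      have h' : ∀ x:ℝ, Real.cos (-x) ^ (2*m) = Real.cos x ^ (2*m) := by intro x; rw [Real.cos_neg]
      simp only [h'] at h
      have e1 := intervalIntegral.integral_symm (μ := MeasureTheory.volume)
        (f := fun x => Real.cos x ^ (2*m)) (π/2) 0
      have e2 := intervalIntegral.integral_symm (μ := MeasureTheory.volume)
        (f := fun x => Real.cos x ^ (2*m)) 0 (-(π/2))
      linarith [h, e1, e2]
    -- ∫ π/2..π cos^{2m} = ∫ 0..π/2 cos^{2m}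
    have h3 : (∫ x in (π/2:ℝ)..π, Real.cos x ^ (2*m)) = ∫ x in (0:ℝ)..(π/2), Real.cos x ^ (2*m) := by
      have := intervalIntegral.integral_comp_sub_left (fun x => Real.cos x ^ (2*m)) π
        (a := 0) (b := π/2)
      simp only [sub_zero] at this
      rw [show π - π/2 = π/2 by ring] at this
      rw [← this]
      apply intervalIntegral.integral_congr
      intro x _
      show Real.cos (π - x) ^ (2*m) = Real.cos x ^ (2*m)
      rw [Real.cos_pi_sub, neg_pow, Even.neg_one_pow (even_two_mul m), one_mul]
    have hint : ∀ (a b : ℝ), IntervalIntegrable (fun x => Real.cos x ^ (2*m)) MeasureTheory.volume a b :=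
      fun a b => (Continuous.pow Real.continuous_cos _).intervalIntegrable a b
    have split1 : Wal (2*m) = (∫ x in (0:ℝ)..(π/2), Real.cos x ^ (2*m)) + ∫ x in (π/2:ℝ)..π, Real.cos x ^ (2*m) :=
      (intervalIntegral.integral_add_adjacent_intervals (hint 0 (π/2)) (hint (π/2) π)).symm
    have split2 : (∫ x in (-(π/2):ℝ)..(π/2), Real.cos x ^ (2*m)) = (∫ x in (-(π/2):ℝ)..0, Real.cos x ^ (2*m)) + ∫ x in (0:ℝ)..(π/2), Real.cos x ^ (2*m) :=
      (intervalIntegral.integral_add_adjacent_intervals (hint _ 0) (hint 0 _)).symm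
    rw [h1, split2, h2, split1, h3]
  rw [heq, integral_sin_pow_even, cW]

lemma sum_even_kill (f : ℕ → ℝ) (h : ∀ k, Odd k → f k = 0) (N : ℕ) :
    ∑ k ∈ range (2*N+1), f k = ∑ j ∈ range (N+1), f (2*j) := by
  induction N with
  | zero => simp
  | succ N ih =>
    have e1 : 2*(N+1)+1 = (2*N+1)+1+1 := by ring
    rw [e1, Finset.sum_range_succ, Finset.sum_range_succ, ih,
      Finset.sum_range_succ (fun j => f (2*j)) (N+1), h (2*N+1) ⟨N, by ring⟩]
    have e2 : 2*N+1+1 = 2*(N+1) := by ring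
    rw [e2]
    ring

lemma Wal_sum (n : ℕ) : ∑ k ∈ range n, Wal k * Wal (n-1-k) = if Odd n then π^2 else 0 := by
  cases n with
  | zero => simp
  | succ m =>
    have hsimp : ∀ k, m + 1 - 1 - k = m - k := by intro k; omega
    simp only [hsimp]
    rcases Nat.even_or_odd m with hm | hm
    · obtain ⟨p, hp⟩ := hm
      have hp' : m = 2*p := by omega
      subst hp'
      have hodd : Odd (2*p+1) := ⟨p, by ring⟩
      rw [if_pos hodd]
      rw [sum_even_kill (fun k => Wal k * Wal (2*p - k))
        (fun k hk => by rw [Wal_odd k hk, zero_mul]) p]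
      have : ∀ j ∈ range (p+1), Wal (2*j) * Wal (2*p - 2*j) = π^2 * (cW j * cW (p - j)) := by
        intro j hj
        simp only [mem_range] at hj
        have : 2*p - 2*j = 2*(p-j) := by omega
        rw [this, Wal_even, Wal_even]
        ring
      rw [Finset.sum_congr rfl this, ← Finset.mul_sum, cW_conv, mul_one]
    · have hnotodd : ¬ Odd (m+1) := by simp [Nat.even_add_one, Nat.not_even_iff_odd.mpr hm]
      rw [if_neg hnotodd]
      apply Finset.sum_eq_zero
      intro k hk
      simp only [mem_range] at hk
      rcases Nat.even_or_odd k with hk2 | hk2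
      · have : Odd (m - k) := Nat.Odd.sub_even (by omega) hm hk2
        rw [Wal_odd _ this, mul_zero]
      · rw [Wal_odd _ hk2, zero_mul]

lemma Wal_abs_le (k : ℕ) : |Wal k| ≤ π := by
  have := intervalIntegral.norm_integral_le_of_norm_le_const (a := 0) (b := π) (C := 1)
    (f := fun x => Real.cos x ^ k) (fun x _ => by
      rw [Real.norm_eq_abs, abs_pow]
      exact pow_le_one₀ (abs_nonneg _) (Real.abs_cos_le_one x))
  simpa [Wal, abs_of_pos Real.pi_pos] using this

lemma D_abs_le (u v : ℝ) (hu : |u| ≤ 1) (hv : |v| ≤ 1) (n : ℕ) :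
    |∑ k ∈ range n, u ^ k * v ^ (n-1-k)| ≤ n := by
  calc |∑ k ∈ range n, u ^ k * v ^ (n-1-k)| ≤ ∑ k ∈ range n, |u ^ k * v ^ (n-1-k)| :=
        Finset.abs_sum_le_sum_abs _ _
    _ ≤ ∑ _k ∈ range n, 1 := by
        apply Finset.sum_le_sum
        intro k _
        rw [abs_mul, abs_pow, abs_pow]
        exact mul_le_one₀ (pow_le_one₀ (abs_nonneg _) hu) (by positivity)
          (pow_le_one₀ (abs_nonneg _) hv)
    _ = n := by simp

lemma summ_aux (a : ℕ → ℝ) (r : ℝ) (hr : 1 < r)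
    (hF : ∀ w : ℝ, |w| < r → Summable (fun n : ℕ => a n * w^n)) :
    Summable (fun n : ℕ => |a n| * n) := by
  set w : ℝ := (1+r)/2 with hw
  have hw1 : 1 < w := by rw [hw]; linarith
  have hw0 : 0 < w := by linarith
  have hwr : |w| < r := by rw [abs_of_pos hw0]; rw [hw]; linarith
  have hsum := hF w hwr
  have htend := hsum.tendsto_atTop_zero
  have habs : Filter.Tendsto (fun n => |a n * w^n|) Filter.atTop (nhds 0) := by
    have := htend.abs; simpa using this
  obtain ⟨C, hC⟩ := habs.bddAbove_range
  have hC' : ∀ n, |a n| * w^n ≤ C := by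
    intro n
    have := hC (Set.mem_range_self n)
    rwa [abs_mul, abs_pow, abs_of_pos hw0] at this
  have hinv : ‖(1/w)‖ < 1 := by
    rw [Real.norm_eq_abs, abs_of_pos (by positivity)]
    rw [div_lt_one hw0]; linarith
  have hsum2 : Summable (fun n : ℕ => C * ((n:ℝ) * (1/w)^n)) := by
    have := summable_pow_mul_geometric_of_norm_lt_one 1 hinv
    simpa [pow_one] using this.mul_left C
  apply Summable.of_nonneg_of_le (fun n => by positivity) _ hsum2
  intro n
  have h1 : |a n| * (n:ℝ) = (|a n| * w^n) * ((n:ℝ) * (1/w)^n) := by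
    rw [one_div, inv_pow, mul_mul_mul_comm, mul_inv_cancel₀ (pow_ne_zero n hw0.ne'), mul_one]
  rw [h1]
  apply mul_le_mul_of_nonneg_right (hC' n) (by positivity)

lemma inner_hasSum (F : ℝ → ℝ) (a : ℕ → ℝ) (r : ℝ) (hr : 1 < r)
    (hF : ∀ w : ℝ, |w| < r → HasSum (fun n : ℕ => a n * w^n) (F w))
    (z : ℝ) (hz : |z| ≤ 1) (hs : Summable (fun n : ℕ => |a n| * n))
    (x : ℝ) (hx : x ∈ Set.Ioc 0 π) :
    HasSum (fun n : ℕ => a n * z^n * ∑ k ∈ range n, Real.cos x ^ k * Wal (n-1-k))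
      (∫ y in (0:ℝ)..π, (F (z * Real.cos x) - F (z * Real.cos y)) / (Real.cos x - Real.cos y)) := by
  have habs : ∀ w : ℝ, |z * Real.cos w| < r := by
    intro w
    calc |z * Real.cos w| = |z| * |Real.cos w| := abs_mul _ _
      _ ≤ 1 * 1 := mul_le_mul hz (Real.abs_cos_le_one w) (abs_nonneg _) zero_le_one
      _ < r := by linarith
  set Fn : ℕ → ℝ → ℝ := fun n t => a n * z^n * ∑ k ∈ range n, Real.cos x ^ k * Real.cos t ^ (n-1-k)
    with hFn
  have key : HasSum (fun n : ℕ => ∫ t in (0:ℝ)..π, Fn n t)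
      (∫ y in (0:ℝ)..π, (F (z * Real.cos x) - F (z * Real.cos y)) / (Real.cos x - Real.cos y)) := by
    apply intervalIntegral.hasSum_integral_of_dominated_convergence
      (bound := fun (n : ℕ) (_ : ℝ) => |a n| * n)
    · intro n
      apply Continuous.aestronglyMeasurable
      fun_prop
    · intro n
      apply Filter.Eventually.of_forall
      intro t _
      rw [Real.norm_eq_abs, hFn]
      calc |a n * z^n * ∑ k ∈ range n, Real.cos x ^ k * Real.cos t ^ (n-1-k)|
          = |a n| * |z^n| * |∑ k ∈ range n, Real.cos x ^ k * Real.cos t ^ (n-1-k)| := by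
            rw [abs_mul, abs_mul]
        _ ≤ |a n| * 1 * n := by
            apply mul_le_mul
            · apply mul_le_mul_of_nonneg_left _ (abs_nonneg _)
              rw [abs_pow]; exact pow_le_one₀ (abs_nonneg _) hz
            · exact D_abs_le _ _ (Real.abs_cos_le_one x) (Real.abs_cos_le_one t) n
            · exact abs_nonneg _
            · positivity
        _ = |a n| * n := by ring
    · exact Filter.Eventually.of_forall (fun _ _ => hs)
    · exact intervalIntegrable_const
    · have hne : ∀ᵐ t : ℝ, t ≠ x := by
        have : (volume : Measure ℝ) {x} = 0 := measure_singleton x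
        exact compl_mem_ae_iff.mpr this
      filter_upwards [hne] with t ht htI
      rw [Set.uIoc_of_le Real.pi_pos.le] at htI
      have hcosne : Real.cos x - Real.cos t ≠ 0 := by
        rw [sub_ne_zero]
        intro hcc
        exact ht (Real.injOn_cos (Set.mem_Icc.mpr ⟨htI.1.le, htI.2⟩)
          (Set.mem_Icc.mpr ⟨hx.1.le, hx.2⟩) hcc.symm)
      have hsum := ((hF (z * Real.cos x) (habs x)).sub (hF (z * Real.cos t) (habs t))).div_const
        (Real.cos x - Real.cos t)
      have hfun : ∀ n : ℕ, (a n * (z * Real.cos x)^n - a n * (z * Real.cos t)^n)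
          / (Real.cos x - Real.cos t) = Fn n t := by
        intro n
        rw [hFn]
        have hg := geom_sum₂_mul (Real.cos x) (Real.cos t) n
        have hD : (∑ k ∈ range n, Real.cos x ^ k * Real.cos t ^ (n-1-k))
            = (Real.cos x ^ n - Real.cos t ^ n) / (Real.cos x - Real.cos t) := by
          rw [eq_div_iff hcosne]
          exact hg
        dsimp only
        rw [hD, mul_pow, mul_pow]
        field_simp
      exact funext hfun ▸ hsum
  have hint : ∀ n : ℕ, (∫ t in (0:ℝ)..π, Fn n t)
      = a n * z^n * ∑ k ∈ range n, Real.cos x ^ k * Wal (n-1-k) := by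
    intro n
    rw [hFn]
    dsimp only
    rw [intervalIntegral.integral_const_mul]
    congr 1
    rw [intervalIntegral.integral_finset_sum (fun k _ =>
      ((by fun_prop : Continuous (fun t => Real.cos x ^ k * Real.cos t ^ (n-1-k))).intervalIntegrable 0 π))]
    apply Finset.sum_congr rfl
    intro k _
    rw [intervalIntegral.integral_const_mul]
    rfl
  exact funext hint ▸ key

theorem stmt16 (F : ℝ → ℝ) (a : ℕ → ℝ) (r : ℝ) (hr : 1 < r)
    (hF : ∀ w : ℝ, |w| < r → HasSum (fun n : ℕ => a n * w^n) (F w))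
    (z : ℝ) (hz : |z| ≤ 1) :
    (1/π^2) * (∫ x in (0:ℝ)..π, ∫ y in (0:ℝ)..π,
      (F (z * Real.cos x) - F (z * Real.cos y)) / (Real.cos x - Real.cos y))
    = (F z - F (-z)) / 2 := by
  have hs : Summable (fun n : ℕ => |a n| * n) :=
    summ_aux a r hr (fun w hw => (hF w hw).summable)
  set G : ℕ → ℝ → ℝ := fun n x => a n * z^n * ∑ k ∈ range n, Real.cos x ^ k * Wal (n-1-k)
    with hG
  have key : HasSum (fun n : ℕ => ∫ x in (0:ℝ)..π, G n x)
      (∫ x in (0:ℝ)..π, ∫ y in (0:ℝ)..π,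
        (F (z * Real.cos x) - F (z * Real.cos y)) / (Real.cos x - Real.cos y)) := by
    apply intervalIntegral.hasSum_integral_of_dominated_convergence
      (bound := fun (n : ℕ) (_ : ℝ) => |a n| * n * π)
    · intro n
      apply Continuous.aestronglyMeasurable
      fun_prop
    · intro n
      apply Filter.Eventually.of_forall
      intro t _
      rw [Real.norm_eq_abs, hG]
      calc |a n * z^n * ∑ k ∈ range n, Real.cos t ^ k * Wal (n-1-k)|
          = |a n| * |z^n| * |∑ k ∈ range n, Real.cos t ^ k * Wal (n-1-k)| := by
            rw [abs_mul, abs_mul]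
        _ ≤ |a n| * 1 * (n * π) := by
            apply mul_le_mul
            · apply mul_le_mul_of_nonneg_left _ (abs_nonneg _)
              rw [abs_pow]; exact pow_le_one₀ (abs_nonneg _) hz
            · calc |∑ k ∈ range n, Real.cos t ^ k * Wal (n-1-k)|
                  ≤ ∑ k ∈ range n, |Real.cos t ^ k * Wal (n-1-k)| :=
                    Finset.abs_sum_le_sum_abs _ _
                _ ≤ ∑ _k ∈ range n, π := by
                    apply Finset.sum_le_sum
                    intro k _
                    rw [abs_mul]
                    calc |Real.cos t ^ k| * |Wal (n-1-k)| ≤ 1 * π := by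
                          apply mul_le_mul _ (Wal_abs_le _) (abs_nonneg _) zero_le_one
                          rw [abs_pow]
                          exact pow_le_one₀ (abs_nonneg _) (Real.abs_cos_le_one t)
                      _ = π := one_mul π
                _ = n * π := by simp [mul_comm]
            · exact abs_nonneg _
            · positivity
        _ = |a n| * n * π := by ring
    · exact Filter.Eventually.of_forall (fun _ _ => hs.mul_right π)
    · exact intervalIntegrable_const
    · apply Filter.Eventually.of_forall
      intro t ht
      rw [Set.uIoc_of_le Real.pi_pos.le] at ht
      exact inner_hasSum F a r hr hF z hz hs t ht
  have hint : ∀ n : ℕ, (∫ x in (0:ℝ)..π, G n x)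
      = a n * z^n * (if Odd n then π^2 else 0) := by
    intro n
    rw [hG]
    dsimp only
    rw [intervalIntegral.integral_const_mul]
    congr 1
    rw [intervalIntegral.integral_finset_sum (fun k _ =>
      ((by fun_prop : Continuous (fun t => Real.cos t ^ k * Wal (n-1-k))).intervalIntegrable 0 π))]
    rw [← Wal_sum n]
    apply Finset.sum_congr rfl
    intro k _
    rw [intervalIntegral.integral_mul_const]
    rfl
  rw [funext hint] at key
  have h1 := hF z (lt_of_le_of_lt hz hr)
  have h2 := hF (-z) (by rw [abs_neg]; exact lt_of_le_of_lt hz hr)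
  have h3 := (h1.sub h2).div_const 2
  have h4 := key.div_const (π^2)
  have hpi : (π:ℝ)^2 ≠ 0 := by positivity
  have hfun : ∀ n : ℕ, a n * z^n * (if Odd n then π^2 else 0) / π^2
      = (a n * z^n - a n * (-z)^n) / 2 := by
    intro n
    rcases Nat.even_or_odd n with he | ho
    · rw [if_neg (Nat.not_odd_iff_even.mpr he), he.neg_pow]
      simp
    · rw [if_pos ho, ho.neg_pow]
      field_simp
      ring
  rw [funext hfun] at h4
  have hmain := h4.unique h3
  rw [← hmain]
  ring
end

section
/- 4·∫₀^{π/4} θ²/sin(2θ) dθ = π·G − (7/4)·ζ(3). -/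
open Real MeasureTheory intervalIntegral Filter Finset Topology

lemma ftc_sq_sin (a : ℝ) (ha : a ≠ 0) (b : ℝ) :
    ∫ x in (0:ℝ)..b, x ^ 2 * Real.sin (a * x)
      = (-b ^ 2 * Real.cos (a * b) / a + 2 * b * Real.sin (a * b) / a ^ 2
          + 2 * Real.cos (a * b) / a ^ 3) - 2 / a ^ 3 := by
  have h : ∀ x ∈ Set.uIcc (0:ℝ) b, HasDerivAt
      (fun y => -y ^ 2 * Real.cos (a * y) / a + 2 * y * Real.sin (a * y) / a ^ 2
        + 2 * Real.cos (a * y) / a ^ 3) (x ^ 2 * Real.sin (a * x)) x := by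
    intro x _
    have hax : HasDerivAt (fun y : ℝ => a * y) a x := by
      simpa using (hasDerivAt_id x).const_mul a
    have hc : HasDerivAt (fun y : ℝ => Real.cos (a * y)) (-Real.sin (a * x) * a) x :=
      (Real.hasDerivAt_cos (a * x)).comp x hax
    have hs : HasDerivAt (fun y : ℝ => Real.sin (a * y)) (Real.cos (a * x) * a) x :=
      (Real.hasDerivAt_sin (a * x)).comp x hax
    have h1 : HasDerivAt (fun y : ℝ => -y ^ 2 * Real.cos (a * y) / a)
        ((-(2 * x) * Real.cos (a * x) + -x ^ 2 * (-Real.sin (a * x) * a)) / a) x := by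
      have := ((hasDerivAt_pow 2 x).neg.mul hc).div_const a
      simpa using this
    have h2 : HasDerivAt (fun y : ℝ => 2 * y * Real.sin (a * y) / a ^ 2)
        ((2 * Real.sin (a * x) + 2 * x * (Real.cos (a * x) * a)) / a ^ 2) x := by
      have hx2 : HasDerivAt (fun y : ℝ => 2 * y) 2 x := by
        simpa using (hasDerivAt_id x).const_mul 2
      simpa using (hx2.mul hs).div_const (a ^ 2)
    have h3 : HasDerivAt (fun y : ℝ => 2 * Real.cos (a * y) / a ^ 3)
        ((2 * (-Real.sin (a * x) * a)) / a ^ 3) x := by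
      simpa using (hc.const_mul 2).div_const (a ^ 3)
    have := (h1.add h2).add h3
    refine this.congr_deriv ?_
    field_simp
    ring
  rw [intervalIntegral.integral_eq_sub_of_hasDerivAt h
    ((Continuous.intervalIntegrable (by fun_prop) _ _))]
  simp [Real.cos_zero, Real.sin_zero]

lemma val_I (k : ℕ) :
    ∫ x in (0:ℝ)..(π/2), x ^ 2 * Real.sin ((2 * (k:ℝ) + 1) * x)
      = π * (-1) ^ k / (2 * (k:ℝ) + 1) ^ 2 - 2 / (2 * (k:ℝ) + 1) ^ 3 := by
  have ha : (2 * (k:ℝ) + 1) ≠ 0 := by positivity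
  rw [ftc_sq_sin _ ha]
  have hcos : Real.cos ((2 * (k:ℝ) + 1) * (π / 2)) = 0 := by
    rw [show (2 * (k:ℝ) + 1) * (π / 2) = π / 2 + k * π by ring]
    simp [Real.cos_add, Real.sin_nat_mul_pi]
  have hsin : Real.sin ((2 * (k:ℝ) + 1) * (π / 2)) = (-1) ^ k := by
    rw [show (2 * (k:ℝ) + 1) * (π / 2) = π / 2 + k * π by ring,
      Real.sin_add_nat_mul_pi]
    simp
  rw [hcos, hsin]
  field_simp
  ring

lemma key_id (N : ℕ) : ∀ x ∈ Set.uIcc (0:ℝ) (π/2),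
    x ^ 2 / Real.sin x
      = (∑ k ∈ Finset.range N, 2 * x ^ 2 * Real.sin ((2 * (k:ℝ) + 1) * x))
        + (x ^ 2 / Real.sin x) * Real.cos (2 * (N:ℝ) * x) := by
  induction N with
  | zero => intro x _; simp
  | succ n ih =>
    intro x hx
    rw [Finset.sum_range_succ]
    have hx' : x ∈ Set.Icc (0:ℝ) (π/2) := by
      rwa [Set.uIcc_of_le (by positivity)] at hx
    have hcast : ((n:ℝ) + 1) = ((n + 1 : ℕ) : ℝ) := by push_cast; ring
    have step : x ^ 2 / Real.sin x * Real.cos (2 * (n:ℝ) * x)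
        = 2 * x ^ 2 * Real.sin ((2 * (n:ℝ) + 1) * x)
          + x ^ 2 / Real.sin x * Real.cos (2 * ((n:ℝ) + 1) * x) := by
      rcases eq_or_lt_of_le hx'.1 with h0 | h0
      · simp [← h0]
      · have hs : 0 < Real.sin x :=
          Real.sin_pos_of_pos_of_lt_pi h0 (lt_of_le_of_lt hx'.2 (by linarith [pi_pos]))
        have hd := Real.cos_sub_cos (2 * (n:ℝ) * x) (2 * ((n:ℝ) + 1) * x)
        rw [show (2 * (n:ℝ) * x + 2 * ((n:ℝ) + 1) * x) / 2 = (2 * n + 1) * x by ring,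
          show (2 * (n:ℝ) * x - 2 * ((n:ℝ) + 1) * x) / 2 = -x by ring, Real.sin_neg] at hd
        have e : x ^ 2 / Real.sin x * Real.cos (2 * (n:ℝ) * x)
            - x ^ 2 / Real.sin x * Real.cos (2 * ((n:ℝ) + 1) * x)
            = 2 * x ^ 2 * Real.sin ((2 * (n:ℝ) + 1) * x) := by
          rw [← mul_sub, hd, div_mul_eq_mul_div, div_eq_iff hs.ne']; ring
        linarith [e]
    rw [← hcast]
    linarith [step, ih x hx]

lemma intgf : IntervalIntegrable (fun x => x ^ 2 / Real.sin x) volume 0 (π/2) := by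
  rw [intervalIntegrable_iff, Set.uIoc_of_le (by positivity)]
  apply Measure.integrableOn_of_bounded (M := π ^ 2 / 4) measure_Ioc_lt_top.ne
    ((by fun_prop : Measurable fun x : ℝ => x ^ 2 / Real.sin x).aestronglyMeasurable)
  refine (ae_restrict_iff' measurableSet_Ioc).2 (ae_of_all _ fun x hx => ?_)
  have h1 := Real.mul_le_sin hx.1.le hx.2
  have hs : 0 < Real.sin x := lt_of_lt_of_le (by have := hx.1; positivity) h1
  have hπ := pi_pos
  have h2 : π ^ 2 / 4 * (2 / π * x) = π / 2 * x := by field_simp; ring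
  rw [Real.norm_eq_abs, abs_of_nonneg (div_nonneg (by positivity) hs.le), div_le_iff₀ hs]
  nlinarith [mul_le_mul_of_nonneg_left h1 (by positivity : (0:ℝ) ≤ π ^ 2 / 4),
    mul_nonneg hx.1.le (sub_nonneg.2 hx.2)]

lemma RLlim : Tendsto (fun N : ℕ =>
      ∫ x in (0:ℝ)..(π/2), (x ^ 2 / Real.sin x) * Real.cos (2 * (N:ℝ) * x))
    atTop (𝓝 0) := by
  have hfi : IntegrableOn (fun x => x ^ 2 / Real.sin x) (Set.Icc 0 (π/2)) := by
    have := intgf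
    rwa [intervalIntegrable_iff_integrableOn_Icc_of_le (by positivity)] at this
  set F : ℝ → ℂ := Set.indicator (Set.Icc 0 (π/2)) (fun x => ((x ^ 2 / Real.sin x : ℝ) : ℂ))
    with hF
  have hFi : Integrable F := (IntegrableOn.integrable_indicator hfi.ofReal measurableSet_Icc)
  have hT := Real.tendsto_integral_exp_smul_cocompact F
  have hw : Tendsto (fun N : ℕ => (N:ℝ) / π) atTop (cocompact ℝ) := by
    rw [cocompact_eq_atBot_atTop]
    exact (tendsto_natCast_atTop_atTop.atTop_div_const pi_pos).mono_right le_sup_right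
  have hre : Tendsto (fun N : ℕ =>
      (∫ v : ℝ, Real.fourierChar (-(v * ((N:ℝ) / π))) • F v).re) atTop (𝓝 0) := by
    have := (Complex.continuous_re.tendsto 0).comp (hT.comp hw)
    exact this
  convert hre using 2 with N
  set w : ℝ := (N:ℝ) / π with hwdef
  have hchar : Continuous fun v : ℝ => (Real.fourierChar (-(v * w)) : ℂ) := by
    simp only [Real.fourierChar_apply]
    fun_prop
  have hint : Integrable (fun v : ℝ => Real.fourierChar (-(v * w)) • F v) := by
    simp only [Circle.smul_def]
    exact hFi.bdd_mul hchar.aestronglyMeasurable (c := 1) (ae_of_all _ fun v => (Circle.norm_coe _).le)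
  have h' := integral_re hint
  simp only [RCLike.re_to_complex] at h'
  rw [← h']
  have hpt : ∀ v : ℝ, (Real.fourierChar (-(v * w)) • F v).re
      = Set.indicator (Set.Icc 0 (π/2))
          (fun x => (x ^ 2 / Real.sin x) * Real.cos (2 * (N:ℝ) * x)) v := by
    intro v
    by_cases hv : v ∈ Set.Icc (0:ℝ) (π/2)
    · have hcos : Real.cos (2 * π * -(v * w)) = Real.cos (2 * (N:ℝ) * v) := by
        rw [show (2 * π * -(v * w)) = -(2 * π * (v * w)) by ring, Real.cos_neg]
        congr 1
        rw [hwdef]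
        field_simp
      simp only [hF, Set.indicator_of_mem hv, Circle.smul_def, Real.fourierChar_apply,
        smul_eq_mul, Complex.mul_re, Complex.ofReal_re, Complex.ofReal_im,
        Complex.exp_ofReal_mul_I_re]
      rw [hcos]
      ring
    · simp [hF, Set.indicator_of_notMem hv]
  simp_rw [hpt]
  rw [MeasureTheory.integral_indicator measurableSet_Icc,
    MeasureTheory.integral_Icc_eq_integral_Ioc,
    ← intervalIntegral.integral_of_le (by positivity : (0:ℝ) ≤ π/2)]

lemma base_sum (p : ℕ) (hp : 1 < p) : Summable (fun n : ℕ => (1:ℝ) / ((n:ℝ) + 1) ^ p) := by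
  have h := (summable_one_div_nat_pow (p := p)).2 hp
  have := (summable_nat_add_iff (f := fun n : ℕ => (1:ℝ) / (n:ℝ) ^ p) 1).2 h
  simpa using this

lemma odd_le (k p : ℕ) : (1:ℝ) / (2 * (k:ℝ) + 1) ^ p ≤ 1 / ((k:ℝ) + 1) ^ p := by
  apply div_le_div_of_nonneg_left one_pos.le (by positivity)
  have : (0:ℝ) ≤ (k:ℝ) := Nat.cast_nonneg k
  gcongr <;> linarith

lemma sum_odd_sq : Summable (fun k : ℕ => ((-1:ℝ)) ^ k / (2 * (k:ℝ) + 1) ^ 2) := by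
  apply Summable.of_abs
  apply Summable.of_nonneg_of_le (fun k => abs_nonneg _) _ (base_sum 2 one_lt_two)
  intro k
  rw [abs_div, abs_pow, abs_neg, abs_one, one_pow, abs_of_nonneg (by positivity)]
  exact odd_le k 2

lemma sum_odd_cube : Summable (fun k : ℕ => (1:ℝ) / (2 * (k:ℝ) + 1) ^ 3) := by
  exact Summable.of_nonneg_of_le (fun k => by positivity) (fun k => odd_le k 3)
    (base_sum 3 (by norm_num))

lemma odd_cube_val :
    (∑' k : ℕ, (1:ℝ) / (2 * (k:ℝ) + 1) ^ 3) = 7/8 * ∑' n : ℕ, (1:ℝ) / ((n:ℝ) + 1) ^ 3 := by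
  have hf : Summable (fun n : ℕ => (1:ℝ) / ((n:ℝ) + 1) ^ 3) := base_sum 3 (by norm_num)
  have he : Summable (fun k : ℕ => (1:ℝ) / (((2 * k : ℕ):ℝ) + 1) ^ 3) := by
    apply sum_odd_cube.congr; intro k; push_cast; ring_nf
  have ho : Summable (fun k : ℕ => (1:ℝ) / (((2 * k + 1 : ℕ):ℝ) + 1) ^ 3) := by
    apply Summable.of_nonneg_of_le (fun k => by positivity) _ hf
    intro k
    apply div_le_div_of_nonneg_left one_pos.le (by positivity)
    have : (0:ℝ) ≤ (k:ℝ) := Nat.cast_nonneg k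
    gcongr <;> push_cast <;> linarith
  have key := tsum_even_add_odd (f := fun n : ℕ => (1:ℝ) / ((n:ℝ) + 1) ^ 3) he ho
  have h1 : (∑' k : ℕ, (1:ℝ) / (((2 * k : ℕ):ℝ) + 1) ^ 3)
      = ∑' k : ℕ, (1:ℝ) / (2 * (k:ℝ) + 1) ^ 3 := by
    apply tsum_congr; intro k; push_cast; ring_nf
  have h2 : (∑' k : ℕ, (1:ℝ) / (((2 * k + 1 : ℕ):ℝ) + 1) ^ 3)
      = (1/8) * ∑' n : ℕ, (1:ℝ) / ((n:ℝ) + 1) ^ 3 := by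
    rw [← tsum_mul_left]
    apply tsum_congr; intro k; push_cast; field_simp; ring
  rw [h1, h2] at key
  linarith [key]

theorem stmt18 :
    4 * (∫ θ in (0:ℝ)..(π/4), θ^2 / Real.sin (2*θ))
    = π * (∑' n : ℕ, (-1:ℝ)^n / (2*n+1)^2) - (7/4) * (∑' n : ℕ, (1:ℝ)/(n+1)^3) := by
  set S : ℝ := ∫ x in (0:ℝ)..(π/2), x ^ 2 / Real.sin x with hSdef
  -- substitution
  have hsub : (∫ θ in (0:ℝ)..(π/4), θ^2 / Real.sin (2*θ)) = 1/8 * S := by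
    have h1 : (∫ θ in (0:ℝ)..(π/4), θ^2 / Real.sin (2*θ))
        = ∫ θ in (0:ℝ)..(π/4), (fun u => u^2 / (4 * Real.sin u)) (2*θ) := by
      apply intervalIntegral.integral_congr
      intro θ _
      simp only
      rw [show (2*θ)^2 = 4 * θ^2 by ring, mul_div_mul_left _ _ (by norm_num : (4:ℝ) ≠ 0)]
    rw [h1, intervalIntegral.integral_comp_mul_left (fun u => u^2 / (4 * Real.sin u))
      two_ne_zero]
    rw [show (2:ℝ) * (π/4) = π/2 by ring, show (2:ℝ) * 0 = 0 by ring]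
    have h2 : (∫ u in (0:ℝ)..(π/2), u^2 / (4 * Real.sin u))
        = ∫ u in (0:ℝ)..(π/2), (u^2 / Real.sin u) / 4 := by
      apply intervalIntegral.integral_congr
      intro u _
      show u ^ 2 / (4 * Real.sin u) = u ^ 2 / Real.sin u / 4
      rw [div_div, mul_comm 4 (Real.sin u)]
    rw [h2, intervalIntegral.integral_div]
    simp only [smul_eq_mul, hSdef]
    ring
  -- partial sums identity
  have hS : ∀ N : ℕ, S
      = (∑ k ∈ Finset.range N,
          2 * (π * (-1)^k / (2*(k:ℝ)+1)^2 - 2 / (2*(k:ℝ)+1)^3))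
        + ∫ x in (0:ℝ)..(π/2), (x^2 / Real.sin x) * Real.cos (2*(N:ℝ)*x) := by
    intro N
    have hterm : ∀ k : ℕ, IntervalIntegrable
        (fun x => 2 * x^2 * Real.sin ((2*(k:ℝ)+1)*x)) volume 0 (π/2) :=
      fun k => Continuous.intervalIntegrable (by fun_prop) _ _
    have hsumi : IntervalIntegrable
        (fun x => ∑ k ∈ Finset.range N, 2 * x^2 * Real.sin ((2*(k:ℝ)+1)*x)) volume 0 (π/2) := by
      apply Continuous.intervalIntegrable
      exact continuous_finset_sum _ (fun k _ => by fun_prop)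
    have hrem : IntervalIntegrable
        (fun x => (x^2 / Real.sin x) * Real.cos (2*(N:ℝ)*x)) volume 0 (π/2) :=
      intgf.mul_continuousOn (Continuous.continuousOn (by fun_prop))
    rw [hSdef, intervalIntegral.integral_congr (key_id N),
      intervalIntegral.integral_add hsumi hrem]
    congr 1
    rw [intervalIntegral.integral_finset_sum (fun k _ => hterm k)]
    apply Finset.sum_congr rfl
    intro k _
    have h3 : (∫ x in (0:ℝ)..(π/2), 2 * x^2 * Real.sin ((2*(k:ℝ)+1)*x))
        = 2 * ∫ x in (0:ℝ)..(π/2), x^2 * Real.sin ((2*(k:ℝ)+1)*x) := by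
      rw [← intervalIntegral.integral_const_mul]
      apply intervalIntegral.integral_congr
      intro x _
      ring
    rw [h3, val_I]
  -- summability
  have hA1 : Summable (fun k : ℕ => π * (-1)^k / (2*(k:ℝ)+1)^2) :=
    (sum_odd_sq.mul_left π).congr (fun k => by ring)
  have hA2 : Summable (fun k : ℕ => 2 / (2*(k:ℝ)+1)^3) :=
    (sum_odd_cube.mul_left 2).congr (fun k => by ring)
  have hA : Summable (fun k : ℕ =>
      2 * (π * (-1)^k / (2*(k:ℝ)+1)^2 - 2 / (2*(k:ℝ)+1)^3)) :=
    ((hA1.sub hA2).mul_left 2)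
  -- limit of partial sums, two ways
  have hps := hA.hasSum.tendsto_sum_nat
  have hps2 : Tendsto (fun N : ℕ => ∑ k ∈ Finset.range N,
      2 * (π * (-1)^k / (2*(k:ℝ)+1)^2 - 2 / (2*(k:ℝ)+1)^3)) atTop (𝓝 S) := by
    have h4 := (tendsto_const_nhds (x := S) (f := atTop (α := ℕ))).sub RLlim
    rw [sub_zero] at h4
    apply h4.congr
    intro N
    linarith [hS N]
  have hval : (∑' k : ℕ, 2 * (π * (-1)^k / (2*(k:ℝ)+1)^2 - 2 / (2*(k:ℝ)+1)^3)) = S :=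
    tendsto_nhds_unique hps hps2
  -- evaluate the tsum
  have htsum : (∑' k : ℕ, 2 * (π * (-1)^k / (2*(k:ℝ)+1)^2 - 2 / (2*(k:ℝ)+1)^3))
      = 2 * (π * (∑' n : ℕ, (-1:ℝ)^n / (2*(n:ℝ)+1)^2)
          - 2 * ∑' k : ℕ, (1:ℝ) / (2*(k:ℝ)+1)^3) := by
    rw [tsum_mul_left, hA1.tsum_sub hA2]
    congr 1
    congr 1
    · have : ∀ k : ℕ, π * (-1)^k / (2*(k:ℝ)+1)^2 = π * ((-1:ℝ)^k / (2*(k:ℝ)+1)^2) :=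
        fun k => by ring
      rw [tsum_congr this, tsum_mul_left]
    · have : ∀ k : ℕ, (2:ℝ) / (2*(k:ℝ)+1)^3 = 2 * ((1:ℝ) / (2*(k:ℝ)+1)^3) :=
        fun k => by ring
      rw [tsum_congr this, tsum_mul_left]
  rw [hsub]
  rw [htsum, odd_cube_val] at hval
  linear_combination (1/2 : ℝ) * hval.symm
end

section
/- ∫₀^{π/2} θ·log(tan θ) dθ = (7/8)·ζ(3). -/
open Real MeasureTheory Filter


lemma integral_theta_cos (k : ℕ) :
    ∫ θ in (0:ℝ)..(π/2), θ * Real.cos ((4*k+2)*θ) = -2/(4*k+2)^2 := by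
  have ha : (4*(k:ℝ)+2) ≠ 0 := by positivity
  set a : ℝ := 4*k+2 with hadef
  have h : ∀ x ∈ Set.uIcc (0:ℝ) (π/2),
      HasDerivAt (fun θ : ℝ => θ * Real.sin (a*θ)/a + Real.cos (a*θ)/a^2)
        (x * Real.cos (a*x)) x := by
    intro x _
    have h1 : HasDerivAt (fun θ:ℝ => a*θ) a x := by
      simpa using (hasDerivAt_id x).const_mul a
    have hs : HasDerivAt (fun θ:ℝ => Real.sin (a*θ)) (Real.cos (a*x)*a) x :=
      (Real.hasDerivAt_sin (a*x)).comp x h1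
    have hc : HasDerivAt (fun θ:ℝ => Real.cos (a*θ)) (-Real.sin (a*x)*a) x :=
      (Real.hasDerivAt_cos (a*x)).comp x h1
    have H := (((hasDerivAt_id x).mul hs).div_const a).add (hc.div_const (a^2))
    refine H.congr_deriv ?_
    simp only [id]
    field_simp
    ring
  rw [intervalIntegral.integral_eq_sub_of_hasDerivAt h
    (((continuous_id.mul ((Real.continuous_cos.comp (continuous_const.mul continuous_id))))).intervalIntegrable _ _)]
  have hpi : a * (π/2) = (2*k+1)*π := by push_cast [hadef]; ring
  have hsin : Real.sin (a * (π/2)) = 0 := by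
    rw [hpi]; exact_mod_cast Real.sin_nat_mul_pi (2*k+1)
  have hcos : Real.cos (a * (π/2)) = -1 := by
    rw [hpi]
    have : ((2*k+1 : ℕ) : ℝ) * π = 2*k*π + π := by push_cast; ring
    rw [show (2*(k:ℝ)+1)*π = (k:ℝ)*(2*π) + π by ring, Real.cos_add,
      Real.cos_nat_mul_two_pi]
    simp
  rw [hsin, hcos]
  simp
  ring

lemma abs_exp_two_theta (θ : ℝ) : ‖Complex.exp (2*θ*Complex.I)‖ = 1 := by
  rw [show ((2:ℂ)*θ*Complex.I) = (2*θ:ℝ)*Complex.I by push_cast; ring]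
  exact Complex.norm_exp_ofReal_mul_I _

lemma hasSum_logabs (r θ : ℝ) (hr0 : 0 ≤ r) (hr1 : r < 1) :
    HasSum (fun k : ℕ => -2 * r^(2*k+1) * Real.cos ((4*k+2)*θ) / (2*k+1))
      (Real.log (‖1 - r * Complex.exp (2*θ*Complex.I)‖)
        - Real.log (‖1 + r * Complex.exp (2*θ*Complex.I)‖)) := by
  set z : ℂ := r * Complex.exp (2*θ*Complex.I) with hz
  have hnz : ‖z‖ < 1 := by
    rw [hz, norm_mul, Complex.norm_real, Real.norm_eq_abs, abs_of_nonneg hr0]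
    have : ‖Complex.exp (2*θ*Complex.I)‖ = 1 := abs_exp_two_theta θ
    rw [this, mul_one]; exact hr1
  have h1 := Complex.hasSum_taylorSeries_neg_log (z := z) hnz
  have h2 := Complex.hasSum_taylorSeries_neg_log (z := -z) (by rwa [norm_neg])
  have h3 := h2.sub h1
  have h4 := Complex.reCLM.hasSum h3
  -- h4 : HasSum (fun n => re ((-z)^n/n - z^n/n)) (re (-log(1-(-z)) - -log(1-z)))
  have hre : Complex.reCLM (-Complex.log (1 - -z) - -Complex.log (1 - z))
      = Real.log (‖1-z‖) - Real.log (‖1+z‖) := by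
    simp [Complex.log_re, sub_neg_eq_add]
    ring
  rw [hre] at h4
  -- restrict to odd indices
  have hinj : Function.Injective (fun k : ℕ => 2*k+1) := by
    intro a b h
    simp only at h
    omega
  have hzero : ∀ n ∉ Set.range (fun k : ℕ => 2*k+1),
      Complex.reCLM ((-z)^n/(n:ℂ) - z^n/(n:ℂ)) = 0 := by
    intro n hn
    have he : Even n := by
      rcases Nat.even_or_odd n with h | h
      · exact h
      · obtain ⟨m, hm⟩ := h
        exact absurd (⟨m, hm.symm⟩ : n ∈ Set.range (fun k : ℕ => 2*k+1)) hn
    rw [he.neg_pow]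
    simp
  have h5 := (Function.Injective.hasSum_iff hinj hzero).mpr h4
  have hterm : (fun x : ℕ => Complex.reCLM ((-z)^x/(x:ℂ) - z^x/(x:ℂ))) ∘ (fun k : ℕ => 2*k+1)
      = fun k : ℕ => -2 * r^(2*k+1) * Real.cos ((4*k+2)*θ) / (2*k+1) := by
    funext k
    show ((-z)^(2*k+1)/((2*k+1:ℕ):ℂ) - z^(2*k+1)/((2*k+1:ℕ):ℂ)).re = _
    have hzp : z^(2*k+1) = ((r^(2*k+1):ℝ):ℂ) * Complex.exp (((4*k+2)*θ:ℝ)*Complex.I) := by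
      rw [hz, mul_pow, ← Complex.exp_nat_mul]
      push_cast
      ring_nf
    have hodd : (-z)^(2*k+1) = -(z^(2*k+1)) := (Odd.neg_pow ⟨k, by ring⟩ z)
    have hc : ((2*k+1:ℕ):ℂ) ≠ 0 := Nat.cast_ne_zero.mpr (by omega)
    rw [hodd, hzp]
    have h6 : (-(((r^(2*k+1):ℝ):ℂ) * Complex.exp (((4*k+2)*θ:ℝ)*Complex.I)) / ((2*k+1:ℕ):ℂ)
        - ((r^(2*k+1):ℝ):ℂ) * Complex.exp (((4*k+2)*θ:ℝ)*Complex.I) / ((2*k+1:ℕ):ℂ))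
        = (((-2 * r^(2*k+1) / (2*k+1) : ℝ)) : ℂ) * Complex.exp (((4*k+2)*θ:ℝ)*Complex.I) := by
      push_cast
      field_simp
      ring
    rw [h6, Complex.re_ofReal_mul, Complex.exp_ofReal_mul_I_re]
    push_cast
    ring
  rw [hterm] at h5
  exact h5

lemma exp_re_aux (θ : ℝ) : (Complex.exp (2*θ*Complex.I)).re = Real.cos (2*θ) := by
  rw [show ((2:ℂ)*θ*Complex.I) = ((2*θ:ℝ):ℂ)*Complex.I by push_cast; ring]
  exact Complex.exp_ofReal_mul_I_re _

lemma exp_im_aux (θ : ℝ) : (Complex.exp (2*θ*Complex.I)).im = Real.sin (2*θ) := by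
  rw [show ((2:ℂ)*θ*Complex.I) = ((2*θ:ℝ):ℂ)*Complex.I by push_cast; ring]
  exact Complex.exp_ofReal_mul_I_im _

lemma abs_one_sub_sq (r θ : ℝ) :
    ‖1 - (r:ℂ) * Complex.exp (2*θ*Complex.I)‖ ^ 2
      = (r - Real.cos (2*θ))^2 + Real.sin (2*θ)^2 := by
  rw [Complex.sq_norm, Complex.normSq_apply]
  simp only [Complex.sub_re, Complex.sub_im, Complex.mul_re, Complex.mul_im,
    Complex.one_re, Complex.one_im, Complex.ofReal_re, Complex.ofReal_im,
    exp_re_aux, exp_im_aux]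
  linear_combination (r^2-1) * Real.sin_sq_add_cos_sq (2*θ)

lemma abs_one_add_sq (r θ : ℝ) :
    ‖1 + (r:ℂ) * Complex.exp (2*θ*Complex.I)‖ ^ 2
      = (r + Real.cos (2*θ))^2 + Real.sin (2*θ)^2 := by
  rw [Complex.sq_norm, Complex.normSq_apply]
  simp only [Complex.add_re, Complex.add_im, Complex.mul_re, Complex.mul_im,
    Complex.one_re, Complex.one_im, Complex.ofReal_re, Complex.ofReal_im,
    exp_re_aux, exp_im_aux]
  linear_combination (r^2-1) * Real.sin_sq_add_cos_sq (2*θ)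

lemma abs_eq_of_sq (a b : ℝ) (ha : 0 ≤ a) (hb : 0 ≤ b) (h : a^2 = b^2) : a = b := by
  nlinarith

lemma abs_one_sub_exp (θ : ℝ) (h0 : 0 ≤ θ) (h1 : θ ≤ π/2) :
    ‖1 - Complex.exp (2*θ*Complex.I)‖ = 2 * Real.sin θ := by
  have h := abs_one_sub_sq 1 θ
  rw [Complex.ofReal_one, one_mul] at h
  have hsin2 : Real.sin θ ^2 + Real.cos θ^2 = 1 := Real.sin_sq_add_cos_sq θ
  have hsq : ‖1 - Complex.exp (2*θ*Complex.I)‖ ^ 2 = (2*Real.sin θ)^2 := by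
    rw [h, Real.cos_two_mul, Real.sin_two_mul]
    nlinarith
  exact abs_eq_of_sq _ _ (norm_nonneg _)
    (by linarith [Real.sin_nonneg_of_nonneg_of_le_pi h0 (by linarith [Real.pi_pos])]) hsq

lemma abs_one_add_exp (θ : ℝ) (h0 : 0 ≤ θ) (h1 : θ ≤ π/2) :
    ‖1 + Complex.exp (2*θ*Complex.I)‖ = 2 * Real.cos θ := by
  have h := abs_one_add_sq 1 θ
  rw [Complex.ofReal_one, one_mul] at h
  have hsin2 : Real.sin θ ^2 + Real.cos θ^2 = 1 := Real.sin_sq_add_cos_sq θ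
  have hsq : ‖1 + Complex.exp (2*θ*Complex.I)‖ ^ 2 = (2*Real.cos θ)^2 := by
    rw [h, Real.cos_two_mul, Real.sin_two_mul]
    nlinarith
  exact abs_eq_of_sq _ _ (norm_nonneg _)
    (by linarith [Real.cos_nonneg_of_mem_Icc ⟨by linarith, h1⟩]) hsq

lemma jordan_sin2 {θ : ℝ} (h0 : 0 < θ) (h1 : θ < π/2) :
    8/π^2 * (θ*(π/2-θ)) ≤ Real.sin (2*θ) := by
  have hpi := Real.pi_pos
  rcases le_or_gt θ (π/4) with h | h
  · have := Real.mul_le_sin (x := 2*θ) (by linarith) (by linarith)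
    have hb : 8/π^2 * (θ*(π/2-θ)) ≤ 2/π * (2*θ) := by
      rw [div_mul_eq_mul_div, div_mul_eq_mul_div, div_le_div_iff₀ (by positivity) (by positivity)]
      nlinarith [mul_nonneg (mul_nonneg h0.le h0.le) hpi.le]
    linarith
  · have hrefl : Real.sin (2*θ) = Real.sin (2*(π/2-θ)) := by
      rw [show 2*(π/2-θ) = π - 2*θ by ring, Real.sin_pi_sub]
    have := Real.mul_le_sin (x := 2*(π/2-θ)) (by linarith) (by linarith)
    have hb : 8/π^2 * (θ*(π/2-θ)) ≤ 2/π * (2*(π/2-θ)) := by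
      rw [div_mul_eq_mul_div, div_mul_eq_mul_div, div_le_div_iff₀ (by positivity) (by positivity)]
      nlinarith [mul_nonneg (mul_nonneg (show (0:ℝ) ≤ π/2-θ by linarith) (show (0:ℝ) ≤ π/2-θ by linarith)) hpi.le]
    linarith [hrefl]

lemma neg_log_le_rpow {x : ℝ} (hx : 0 < x) : -Real.log x ≤ 2 * x^(-(1/2):ℝ) := by
  have hy : 0 < x^(-(1/2):ℝ) := Real.rpow_pos_of_pos hx _
  have h1 : Real.log (x^(-(1/2):ℝ)) ≤ x^(-(1/2):ℝ) := Real.log_le_self hy.le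
  rw [Real.log_rpow hx] at h1
  linarith

lemma neg_log_sin2_le {θ : ℝ} (h0 : 0 < θ) (h1 : θ < π/2) :
    -Real.log (Real.sin (2*θ)) ≤ Real.log (π^2/8) + 2*θ^(-(1/2):ℝ) + 2*(π/2-θ)^(-(1/2):ℝ) := by
  have hpi := Real.pi_pos
  have hθ2 : (0:ℝ) < π/2 - θ := by linarith
  have hq : (0:ℝ) < 8/π^2 * (θ*(π/2-θ)) := mul_pos (by positivity) (mul_pos h0 hθ2)
  have hmono := Real.log_le_log hq (jordan_sin2 h0 h1)
  have hexp : Real.log (8/π^2 * (θ*(π/2-θ)))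
      = Real.log (8/π^2) + Real.log θ + Real.log (π/2-θ) := by
    rw [Real.log_mul (by positivity) (mul_pos h0 hθ2).ne', Real.log_mul h0.ne' hθ2.ne']
    ring
  have h8 : Real.log (8/π^2) = - Real.log (π^2/8) := by
    rw [← Real.log_inv]
    norm_num
  have hl1 := neg_log_le_rpow h0
  have hl2 := neg_log_le_rpow hθ2
  linarith [hmono, hexp ▸ hmono]

lemma log_abs_bound {x θ : ℝ} (hx2 : Real.sin (2*θ)^2 ≤ x^2) (hhi : x^2 ≤ 4) (hx : 0 ≤ x)
    (h0 : 0 < θ) (h1 : θ < π/2) :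
    |Real.log x| ≤ Real.log 2 + (Real.log (π^2/8) + 2*θ^(-(1/2):ℝ) + 2*(π/2-θ)^(-(1/2):ℝ)) := by
  have hpi := Real.pi_pos
  have hs : 0 < Real.sin (2*θ) := Real.sin_pos_of_pos_of_lt_pi (by linarith) (by linarith)
  have hxlo : Real.sin (2*θ) ≤ x := by nlinarith
  have hxhi : x ≤ 2 := by nlinarith
  have hlo := Real.log_le_log hs hxlo
  have hhi' := Real.log_le_log (lt_of_lt_of_le hs hxlo) hxhi
  have hs1 : Real.sin (2*θ) ≤ 1 := Real.sin_le_one _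
  have hnn : 0 ≤ -Real.log (Real.sin (2*θ)) := by
    have := Real.log_nonpos hs.le hs1
    linarith
  have h2 : (0:ℝ) ≤ Real.log 2 := Real.log_nonneg (by norm_num)
  have key := neg_log_sin2_le h0 h1
  rw [abs_le]
  constructor <;> linarith


lemma fixed_r_integral (r : ℝ) (hr0 : 0 ≤ r) (hr1 : r < 1) :
    ∫ θ in Set.Ioo (0:ℝ) (π/2), θ * (Real.log (‖1 - r * Complex.exp (2*θ*Complex.I)‖)
        - Real.log (‖1 + r * Complex.exp (2*θ*Complex.I)‖))
      = ∑' k : ℕ, r^(2*k+1)/(2*k+1)^3 := by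
  have hpi := Real.pi_pos
  set f : ℕ → ℝ → ℝ := fun k θ => θ * (-2 * r^(2*k+1) * Real.cos ((4*k+2)*θ) / (2*k+1)) with hf
  have hptw : ∀ θ : ℝ, θ * (Real.log (‖1 - r * Complex.exp (2*θ*Complex.I)‖)
        - Real.log (‖1 + r * Complex.exp (2*θ*Complex.I)‖)) = ∑' k, f k θ := by
    intro θ
    exact (((hasSum_logabs r θ hr0 hr1).mul_left θ).tsum_eq).symm
  simp only [hptw]
  rw [MeasureTheory.integral_tsum ?_ ?_]
  · -- evaluate each integral
    congr 1
    funext k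
    have hioo : ∫ θ in Set.Ioo (0:ℝ) (π/2), f k θ = ∫ θ in Set.Ioc (0:ℝ) (π/2), f k θ :=
      (MeasureTheory.integral_Ioc_eq_integral_Ioo).symm
    rw [hioo, ← intervalIntegral.integral_of_le (by linarith : (0:ℝ) ≤ π/2)]
    have : ∀ θ:ℝ, f k θ = (-2 * r^(2*k+1) / (2*k+1)) * (θ * Real.cos ((4*k+2)*θ)) := by
      intro θ; rw [hf]; ring
    simp only [this]
    rw [intervalIntegral.integral_const_mul, integral_theta_cos k]
    have h1 : ((2:ℝ)*k+1) ≠ 0 := by positivity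
    field_simp
    ring
  · intro k
    apply Measurable.aestronglyMeasurable
    exact measurable_id.mul ((measurable_const.mul ((Real.measurable_cos).comp
      (measurable_const.mul measurable_id))).div_const _)
  · -- summable lintegral bound
    have hb : ∀ k : ℕ, ∫⁻ θ in Set.Ioo (0:ℝ) (π/2), ‖f k θ‖ₑ
        ≤ ENNReal.ofReal ((π/2) * (2 * r^(2*k+1)) * (π/2)) := by
      intro k
      have hle : ∀ θ ∈ Set.Ioo (0:ℝ) (π/2), (‖f k θ‖ₑ : ENNReal)
          ≤ ENNReal.ofReal ((π/2) * (2 * r^(2*k+1))) := by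
        intro θ hθ
        rw [← ofReal_norm]
        apply ENNReal.ofReal_le_ofReal
        rw [hf]
        have h1 : (1:ℝ) ≤ 2*k+1 := by
          have : (0:ℝ) ≤ (k:ℝ) := Nat.cast_nonneg k
          linarith
        have hrp : (0:ℝ) ≤ r^(2*k+1) := by positivity
        have hcos := Real.abs_cos_le_one ((4*k+2)*θ)
        have hθ1 : |θ| ≤ π/2 := by
          rw [abs_of_pos hθ.1]; exact hθ.2.le
        calc ‖θ * (-2 * r^(2*k+1) * Real.cos ((4*k+2)*θ) / (2*k+1))‖
            = |θ| * (2 * r^(2*k+1) * |Real.cos ((4*k+2)*θ)| / (2*k+1)) := by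
              rw [norm_mul]
              congr 1
              rw [Real.norm_eq_abs, abs_div, abs_mul, abs_mul]
              simp [abs_of_nonneg hrp, abs_of_nonneg (by positivity : (0:ℝ) ≤ (2*(k:ℝ)+1))]
          _ ≤ (π/2) * (2 * r^(2*k+1)) := by
              apply mul_le_mul hθ1 ?_ (by positivity) (by positivity)
              calc 2 * r^(2*k+1) * |Real.cos ((4*k+2)*θ)| / (2*k+1)
                  ≤ 2 * r^(2*k+1) * 1 / 1 := by
                    apply div_le_div₀ (by positivity) (by nlinarith) one_pos h1
                _ = 2 * r^(2*k+1) := by ring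
      calc ∫⁻ θ in Set.Ioo (0:ℝ) (π/2), ‖f k θ‖ₑ
          ≤ ∫⁻ _ in Set.Ioo (0:ℝ) (π/2), ENNReal.ofReal ((π/2) * (2 * r^(2*k+1))) := by
            apply MeasureTheory.setLIntegral_mono' measurableSet_Ioo hle
        _ = ENNReal.ofReal ((π/2) * (2 * r^(2*k+1))) * volume (Set.Ioo (0:ℝ) (π/2)) := by
            rw [MeasureTheory.setLIntegral_const]
        _ ≤ ENNReal.ofReal ((π/2) * (2 * r^(2*k+1)) * (π/2)) := by
            rw [Real.volume_Ioo, sub_zero]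
            rw [← ENNReal.ofReal_mul (by positivity)]
    have hsummable : Summable (fun k : ℕ => (π/2) * (2 * r^(2*k+1)) * (π/2)) := by
      apply Summable.mul_right
      apply Summable.mul_left
      apply Summable.mul_left
      have : Summable (fun k : ℕ => r^(2*k+1)) := by
        have hgeo : Summable (fun k : ℕ => (r^2)^k) :=
          summable_geometric_of_lt_one (by positivity) (by nlinarith)
        have : ∀ k:ℕ, r^(2*k+1) = r * (r^2)^k := by
          intro k; rw [← pow_mul]; ring
        simp only [this]
        exact hgeo.mul_left r
      exact this
    apply ne_of_lt
    calc ∑' k, ∫⁻ θ in Set.Ioo (0:ℝ) (π/2), ‖f k θ‖ₑ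
        ≤ ∑' k, ENNReal.ofReal ((π/2) * (2 * r^(2*k+1)) * (π/2)) := ENNReal.tsum_le_tsum hb
      _ = ENNReal.ofReal (∑' k, (π/2) * (2 * r^(2*k+1)) * (π/2)) := by
          rw [ENNReal.ofReal_tsum_of_nonneg (fun k => by positivity) hsummable]
      _ < ⊤ := ENNReal.ofReal_lt_top

lemma summable_inv_odd_cube : Summable (fun k : ℕ => 1/(2*(k:ℝ)+1)^3) := by
  have h3 : Summable (fun n : ℕ => 1/((n:ℝ))^3) := by
    rw [Real.summable_one_div_nat_pow]; norm_num
  have h4 : Summable (fun n : ℕ => 1/((n:ℝ)+1)^3) := by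
    have := (summable_nat_add_iff 1).2 h3
    simpa using this
  apply Summable.of_nonneg_of_le (fun k => by positivity) ?_ h4
  intro k
  have hk : (0:ℝ) ≤ (k:ℝ) := Nat.cast_nonneg k
  apply one_div_le_one_div_of_le (by positivity)
  exact pow_le_pow_left₀ (by positivity) (by linarith) 3

lemma tendsto_S_aux (u : ℕ → ℝ) (hu : ∀ n, u n ∈ Set.Icc (0:ℝ) 1)
    (hlim : Tendsto u atTop (nhds 1)) :
    Tendsto (fun n => ∑' k : ℕ, (u n)^(2*k+1)/(2*k+1)^3) atTop
      (nhds (∑' k : ℕ, 1/(2*(k:ℝ)+1)^3)) := by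
  set c : ℝ → ℝ := fun x => max 0 (min x 1) with hc
  have hc01 : ∀ x, 0 ≤ c x ∧ c x ≤ 1 := fun x =>
    ⟨le_max_left _ _, max_le zero_le_one (min_le_right _ _)⟩
  set G : ℝ → ℝ := fun x => ∑' k : ℕ, (c x)^(2*k+1)/(2*k+1)^3 with hG
  have hGcont : Continuous G := by
    apply continuous_tsum (u := fun k : ℕ => 1/(2*(k:ℝ)+1)^3)
    · intro k
      apply Continuous.div_const
      exact (continuous_const.max (continuous_id.min continuous_const)).pow _
    · exact summable_inv_odd_cube
    · intro k x
      rw [Real.norm_eq_abs, abs_div,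
        abs_of_nonneg (by positivity : (0:ℝ) ≤ (2*(k:ℝ)+1)^3),
        abs_of_nonneg (by positivity : (0:ℝ) ≤ (c x)^(2*k+1))]
      exact div_le_div₀ (by norm_num) (pow_le_one₀ (hc01 x).1 (hc01 x).2) (by positivity) le_rfl
  have h1 : Tendsto (fun n => G (u n)) atTop (nhds (G 1)) :=
    (hGcont.continuousAt).tendsto.comp hlim
  have hGu : ∀ n, G (u n) = ∑' k : ℕ, (u n)^(2*k+1)/(2*k+1)^3 := by
    intro n
    have : c (u n) = u n := by
      simp only [hc]
      rw [min_eq_left (hu n).2, max_eq_right (hu n).1]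
    simp only [hG, this]
  have hG1 : G 1 = ∑' k : ℕ, 1/(2*(k:ℝ)+1)^3 := by
    have : c 1 = 1 := by norm_num [hc]
    simp only [hG, this, one_pow]
  rw [← hG1]
  simpa only [hGu] using h1

lemma odd_sum_eq : (∑' k : ℕ, 1/(2*(k:ℝ)+1)^3) = 7/8 * ∑' n : ℕ, (1:ℝ)/(n+1)^3 := by
  set f : ℕ → ℝ := fun n => 1/((n:ℝ)+1)^3 with hfdef
  have h3 : Summable (fun n : ℕ => 1/((n:ℝ))^3) := by
    rw [Real.summable_one_div_nat_pow]; norm_num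
  have hf : Summable f := by
    have := (summable_nat_add_iff 1).2 h3
    simpa [hfdef] using this
  have he : Summable (fun k => f (2*k)) := hf.comp_injective (fun a b h => by omega)
  have ho : Summable (fun k => f (2*k+1)) := hf.comp_injective (fun a b h => by omega)
  have key := tsum_even_add_odd he ho
  have heven : (∑' k : ℕ, f (2*k)) = ∑' k : ℕ, 1/(2*(k:ℝ)+1)^3 := by
    apply tsum_congr
    intro k
    simp only [hfdef]
    push_cast
    ring_nf
  have hoddterm : ∀ k : ℕ, f (2*k+1) = (1/8) * f k := by
    intro k
    simp only [hfdef]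
    push_cast
    have hk : (0:ℝ) < (k:ℝ)+1 := by positivity
    field_simp
    ring
  have hodd : (∑' k : ℕ, f (2*k+1)) = (1/8) * ∑' n : ℕ, f n := by
    rw [tsum_congr hoddterm, tsum_mul_left]
  rw [← heven]
  have : (∑' n : ℕ, (1:ℝ)/(n+1)^3) = ∑' n : ℕ, f n := rfl
  rw [this]
  linarith [key, hodd]

theorem stmt19 :
    (∫ θ in (0:ℝ)..(π/2), θ * Real.log (Real.tan θ))
    = (7/8) * (∑' n : ℕ, (1:ℝ)/(n+1)^3) := by
  have hpi := Real.pi_pos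
  set μ := volume.restrict (Set.Ioo (0:ℝ) (π/2)) with hμ
  set r : ℕ → ℝ := fun n => 1 - 1/(n+1) with hrdef
  have hr0 : ∀ n, 0 ≤ r n := by
    intro n
    simp only [hrdef]
    have h1 : (1:ℝ)/(n+1) ≤ 1 := by
      apply div_le_one_of_le₀ <;> [skip; positivity]
      have : (0:ℝ) ≤ (n:ℝ) := Nat.cast_nonneg n
      linarith
    linarith
  have hr1 : ∀ n, r n < 1 := by
    intro n
    simp only [hrdef]
    have : (0:ℝ) < 1/(n+1) := by positivity
    linarith
  have hrlim : Tendsto r atTop (nhds 1) := by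
    have h := tendsto_one_div_add_atTop_nhds_zero_nat (𝕜 := ℝ)
    have h2 : Tendsto (fun n : ℕ => 1 - 1/((n:ℝ)+1)) atTop (nhds (1 - 0)) :=
      tendsto_const_nhds.sub h
    simpa [hrdef] using h2
  set F : ℕ → ℝ → ℝ := fun n θ =>
    θ * (Real.log (‖1 - (r n) * Complex.exp (2*θ*Complex.I)‖)
      - Real.log (‖1 + (r n) * Complex.exp (2*θ*Complex.I)‖)) with hF
  set bound : ℝ → ℝ := fun θ =>
    (π*(Real.log 2 + Real.log (π^2/8)) + 2*π*θ^(-(1/2):ℝ)) + 2*π*(π/2-θ)^(-(1/2):ℝ) with hbound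
  -- integrability of the bound
  have hboundInt : Integrable bound μ := by
    have hii : IntervalIntegrable bound volume 0 (π/2) := by
      apply IntervalIntegrable.add
      · apply IntervalIntegrable.add
        · exact intervalIntegrable_const
        · exact (intervalIntegral.intervalIntegrable_rpow' (by norm_num)).const_mul _
      · have h := (intervalIntegral.intervalIntegrable_rpow'
          (a := 0) (b := π/2) (r := -(1/2)) (by norm_num)).symm
        have h2 := h.comp_sub_left (π/2)
        have h3 := h2.const_mul (2*π)
        simpa using h3
    rw [hμ]
    exact ((intervalIntegrable_iff_integrableOn_Ioc_of_le (by linarith)).1 hii).mono_set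
      Set.Ioo_subset_Ioc_self
  -- measurability
  have hmeas : ∀ n, AEStronglyMeasurable (F n) μ := by
    intro n
    have hc1 : Continuous fun θ:ℝ => ‖1 - (r n) * Complex.exp (2*θ*Complex.I)‖ :=
      continuous_norm.comp (continuous_const.sub (continuous_const.mul
        (Complex.continuous_exp.comp ((continuous_const.mul Complex.continuous_ofReal).mul
          continuous_const))))
    have hc2 : Continuous fun θ:ℝ => ‖1 + (r n) * Complex.exp (2*θ*Complex.I)‖ :=
      continuous_norm.comp (continuous_const.add (continuous_const.mul
        (Complex.continuous_exp.comp ((continuous_const.mul Complex.continuous_ofReal).mul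
          continuous_const))))
    exact (measurable_id.mul ((Real.measurable_log.comp hc1.measurable).sub
      (Real.measurable_log.comp hc2.measurable))).aestronglyMeasurable
  -- domination
  have h_bound : ∀ n, ∀ᵐ θ ∂μ, ‖F n θ‖ ≤ bound θ := by
    intro n
    rw [hμ, ae_restrict_iff' measurableSet_Ioo]
    apply Filter.Eventually.of_forall
    intro θ hθ
    obtain ⟨h0, h1⟩ := hθ
    have hcos1 := Real.neg_one_le_cos (2*θ)
    have hcos2 := Real.cos_le_one (2*θ)
    have hrn1 := hr0 n
    have hrn2 := (hr1 n).le
    have hb1 : |Real.log (‖1 - (r n) * Complex.exp (2*θ*Complex.I)‖)|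
        ≤ Real.log 2 + (Real.log (π^2/8) + 2*θ^(-(1/2):ℝ) + 2*(π/2-θ)^(-(1/2):ℝ)) := by
      apply log_abs_bound ?_ ?_ (norm_nonneg _) h0 h1
      · rw [abs_one_sub_sq]
        nlinarith [sq_nonneg (r n - Real.cos (2*θ))]
      · rw [abs_one_sub_sq]
        nlinarith [Real.sin_sq_add_cos_sq (2*θ)]
    have hb2 : |Real.log (‖1 + (r n) * Complex.exp (2*θ*Complex.I)‖)|
        ≤ Real.log 2 + (Real.log (π^2/8) + 2*θ^(-(1/2):ℝ) + 2*(π/2-θ)^(-(1/2):ℝ)) := by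
      apply log_abs_bound ?_ ?_ (norm_nonneg _) h0 h1
      · rw [abs_one_add_sq]
        nlinarith [sq_nonneg (r n + Real.cos (2*θ))]
      · rw [abs_one_add_sq]
        nlinarith [Real.sin_sq_add_cos_sq (2*θ)]
    have htri : |Real.log (‖1 - (r n) * Complex.exp (2*θ*Complex.I)‖)
        - Real.log (‖1 + (r n) * Complex.exp (2*θ*Complex.I)‖)|
        ≤ |Real.log (‖1 - (r n) * Complex.exp (2*θ*Complex.I)‖)|
          + |Real.log (‖1 + (r n) * Complex.exp (2*θ*Complex.I)‖)| :=
      abs_sub _ _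
    have hθabs : |θ| ≤ π/2 := by rw [abs_of_pos h0]; exact h1.le
    rw [hF]
    simp only
    rw [Real.norm_eq_abs, abs_mul]
    calc |θ| * |Real.log (‖1 - (r n) * Complex.exp (2*θ*Complex.I)‖)
        - Real.log (‖1 + (r n) * Complex.exp (2*θ*Complex.I)‖)|
        ≤ (π/2) * (2 * (Real.log 2 + (Real.log (π^2/8) + 2*θ^(-(1/2):ℝ) + 2*(π/2-θ)^(-(1/2):ℝ)))) := by
          apply mul_le_mul hθabs ?_ (abs_nonneg _) (by linarith)
          linarith [htri, hb1, hb2]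
      _ ≤ bound θ := by
          rw [hbound]
          ring_nf
          linarith [le_refl (0:ℝ)]
  -- pointwise convergence
  have h_lim : ∀ᵐ θ ∂μ, Tendsto (fun n => F n θ) atTop (nhds (θ * Real.log (Real.tan θ))) := by
    rw [hμ, ae_restrict_iff' measurableSet_Ioo]
    apply Filter.Eventually.of_forall
    intro θ hθ
    obtain ⟨h0, h1⟩ := hθ
    have hsin : 0 < Real.sin θ := Real.sin_pos_of_pos_of_lt_pi h0 (by linarith)
    have hcos : 0 < Real.cos θ := Real.cos_pos_of_mem_Ioo ⟨by linarith, h1⟩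
    set G : ℝ → ℝ := fun x =>
      θ * (Real.log (‖1 - (x:ℂ) * Complex.exp (2*θ*Complex.I)‖)
        - Real.log (‖1 + (x:ℂ) * Complex.exp (2*θ*Complex.I)‖)) with hG
    have hc1 : Continuous fun x:ℝ => ‖1 - (x:ℂ) * Complex.exp (2*θ*Complex.I)‖ :=
      continuous_norm.comp (continuous_const.sub
        (Complex.continuous_ofReal.mul continuous_const))
    have hc2 : Continuous fun x:ℝ => ‖1 + (x:ℂ) * Complex.exp (2*θ*Complex.I)‖ :=
      continuous_norm.comp (continuous_const.add
        (Complex.continuous_ofReal.mul continuous_const))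
    have habs1 : ‖1 - ((1:ℝ):ℂ) * Complex.exp (2*θ*Complex.I)‖ = 2 * Real.sin θ := by
      rw [Complex.ofReal_one, one_mul]
      exact abs_one_sub_exp θ h0.le h1.le
    have habs2 : ‖1 + ((1:ℝ):ℂ) * Complex.exp (2*θ*Complex.I)‖ = 2 * Real.cos θ := by
      rw [Complex.ofReal_one, one_mul]
      exact abs_one_add_exp θ h0.le h1.le
    have hGcont : ContinuousAt G 1 := by
      apply ContinuousAt.mul continuousAt_const
      apply ContinuousAt.sub
      · exact (Real.continuousAt_log (by rw [habs1]; positivity)).comp hc1.continuousAt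
      · exact (Real.continuousAt_log (by rw [habs2]; positivity)).comp hc2.continuousAt
    have htd : Tendsto (fun n => G (r n)) atTop (nhds (G 1)) :=
      (hGcont.tendsto).comp hrlim
    have hG1 : G 1 = θ * Real.log (Real.tan θ) := by
      rw [hG]
      simp only
      rw [habs1, habs2]
      congr 1
      rw [← Real.log_div (by positivity) (by positivity), Real.tan_eq_sin_div_cos]
      congr 1
      field_simp
    rw [hG1] at htd
    exact htd
  -- dominated convergence
  have hdct := MeasureTheory.tendsto_integral_of_dominated_convergence bound hmeas hboundInt
    h_bound h_lim
  have hFn : ∀ n, ∫ θ, F n θ ∂μ = ∑' k : ℕ, (r n)^(2*k+1)/(2*k+1)^3 := by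
    intro n
    rw [hμ]
    exact fixed_r_integral (r n) (hr0 n) (hr1 n)
  simp only [hFn] at hdct
  have hS := tendsto_S_aux r (fun n => ⟨hr0 n, (hr1 n).le⟩) hrlim
  have hkey : ∫ θ, θ * Real.log (Real.tan θ) ∂μ = ∑' k : ℕ, 1/(2*(k:ℝ)+1)^3 :=
    tendsto_nhds_unique hdct hS
  rw [intervalIntegral.integral_of_le (by linarith : (0:ℝ) ≤ π/2),
    MeasureTheory.integral_Ioc_eq_integral_Ioo]
  rw [← hμ] at *
  rw [hkey, odd_sum_eq]
end
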